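/- Let x, g ∈ ℝⁿ, λ > 0, and x̂ ∈ ℝⁿ with x̂ᵢ ≥ 0 for all i and ⟨g, x − x̂⟩ ≥ 0. Set d = [x − g]₊ − x and x⁺ = x + λd, and suppose there exist γᵢ ≥ 0 (i = 1,…,n) such that λdᵢ = −γᵢ gᵢ for every i. If the step size λ satisfies 2·Σᵢ γᵢ gᵢ² + (λ² − 2λ)·‖d‖² ≤ 0, then ‖x⁺ − x̂‖ ≤ ‖x − x̂‖; that is, the discrete-time projection neural network update does not increase the Lyapunov function L(y) = ‖y − x̂‖². -/

import Mathlib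

open RealInnerProductSpace

/-- If the step size satisfies the Lyapunov condition
`2·Σᵢ γᵢ gᵢ² + (λ² − 2λ)·‖d‖² ≤ 0`, then the discrete-time projection neural
network update does not increase the Lyapunov function `L(y) = ‖y − x̂‖²`. -/
theorem stmt10 (n : ℕ) (x g xhat : EuclideanSpace ℝ (Fin n))
    (lam : ℝ) (hlam : 0 < lam)
    (hxhat : ∀ i, 0 ≤ xhat i) (hgx : 0 ≤ ⟪g, x - xhat⟫)
    (d : EuclideanSpace ℝ (Fin n))
    (hd : ∀ i, d i = max (x i - g i) 0 - x i)
    (xp : EuclideanSpace ℝ (Fin n)) (hxp : xp = x + lam • d)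
    (γ : Fin n → ℝ) (hγ : ∀ i, 0 ≤ γ i)
    (hγd : ∀ i, lam * d i = -(γ i * g i))
    (hstep : 2 * (∑ i, γ i * g i ^ 2) + (lam ^ 2 - 2 * lam) * ‖d‖ ^ 2 ≤ 0) :
    ‖xp - xhat‖ ≤ ‖x - xhat‖ := by
  -- componentwise projection inequality
  have key : ∀ i, (d i + g i) * (x i + d i - xhat i) ≤ 0 := by
    intro i
    rcases le_or_gt (x i - g i) 0 with h | h
    · have hmax : max (x i - g i) 0 = 0 := max_eq_right h
      have h1 : 0 ≤ d i + g i := by rw [hd i, hmax]; linarith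
      have h2 : x i + d i - xhat i ≤ 0 := by
        rw [hd i, hmax]; have := hxhat i; linarith
      exact mul_nonpos_of_nonneg_of_nonpos h1 h2
    · have hmax : max (x i - g i) 0 = x i - g i := max_eq_left h.le
      have h1 : d i + g i = 0 := by rw [hd i, hmax]; ring
      rw [h1, zero_mul]
  have hsum : ∑ i, (d i + g i) * (x i + d i - xhat i) ≤ 0 :=
    Finset.sum_nonpos (fun i _ => key i)
  have hinner_d : ⟪d, x - xhat⟫ = ∑ i, d i * (x i - xhat i) := by
    simp [PiLp.inner_apply, RCLike.inner_apply, mul_comm]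
  have hinner_g : ⟪g, x - xhat⟫ = ∑ i, g i * (x i - xhat i) := by
    simp [PiLp.inner_apply, RCLike.inner_apply, mul_comm]
  have hinner_gd : ⟪g, d⟫ = ∑ i, g i * d i := by
    simp [PiLp.inner_apply, RCLike.inner_apply, mul_comm]
  have hnd : ‖d‖ ^ 2 = ∑ i, d i ^ 2 := by
    rw [← real_inner_self_eq_norm_sq]
    rw [real_inner_self_eq_norm_sq]; exact EuclideanSpace.real_norm_sq_eq d
  have hgd : lam * ⟪g, d⟫ = -(∑ i, γ i * g i ^ 2) := by
    rw [hinner_gd, Finset.mul_sum, ← Finset.sum_neg_distrib]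
    refine Finset.sum_congr rfl fun i _ => ?_
    linear_combination g i * hγd i
  have hsum' : ⟪d, x - xhat⟫ + ‖d‖ ^ 2 + ⟪g, d⟫ + ⟪g, x - xhat⟫ ≤ 0 := by
    rw [hinner_d, hnd, hinner_gd, hinner_g,
      ← Finset.sum_add_distrib, ← Finset.sum_add_distrib, ← Finset.sum_add_distrib]
    refine le_trans (le_of_eq (Finset.sum_congr rfl fun i _ => ?_)) hsum
    ring
  have hexp : ‖xp - xhat‖ ^ 2 =
      ‖x - xhat‖ ^ 2 + 2 * (lam * ⟪d, x - xhat⟫) + lam ^ 2 * ‖d‖ ^ 2 := by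
    have hrw : xp - xhat = (x - xhat) + lam • d := by rw [hxp]; abel
    rw [hrw, norm_add_sq_real, real_inner_smul_right, norm_smul,
      real_inner_comm (x - xhat) d]
    simp [mul_pow, Real.norm_eq_abs, abs_of_pos hlam]
  have hsq : ‖xp - xhat‖ ^ 2 ≤ ‖x - xhat‖ ^ 2 := by
    rw [hexp]
    nlinarith [mul_le_mul_of_nonneg_left hsum' hlam.le, hgd, hstep, hgx,
      mul_nonneg hlam.le hgx]
  nlinarith [norm_nonneg (xp - xhat), norm_nonneg (x - xhat)]
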